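/- For all integers m, n, r ≥ 0, in ℤ[q]: ∏_{ℓ=0}^{m+n-1} (1 + [ℓ+r]_q) = Σ_{i=0}^{n} Σ_{j=0}^{m} q^{r(n-i)} · [m]_q^{⟨n-i⟩} · qbinom(n,i) · c_q^{(r)}(m,j) · ∏_{ℓ=0}^{i-1} (1 + [ℓ+r]_q). -/
import Mathlib


open Finset Polynomial

/-- The q-integer [n]_q = 1 + q + ⋯ + q^{n-1} in ℤ[q]. -/
noncomputable def qint (n : ℕ) : Polynomial ℤ := ∑ i ∈ range n, X ^ i

/-- The q-rising factorial [n]_q^{⟨m⟩} = ∏_{i=n}^{n+m-1} [i]_q. -/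
noncomputable def qrise (n m : ℕ) : Polynomial ℤ := ∏ i ∈ range m, qint (n + i)

/-- The q-binomial coefficient. -/
noncomputable def qbinom : ℕ → ℕ → Polynomial ℤ
  | _, 0 => 1
  | 0, _ + 1 => 0
  | n + 1, k + 1 => qbinom n k + X ^ (k + 1) * qbinom n (k + 1)

/-- The q-Stirling numbers of the first kind (natural-number index version). -/
noncomputable def qStirling1Nat : ℕ → ℕ → Polynomial ℤ
  | 0, 0 => 1
  | 0, _ + 1 => 0
  | _ + 1, 0 => 0
  | n + 1, k + 1 => qStirling1Nat n k + qint n * qStirling1Nat n (k + 1)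

/-- The q-Stirling numbers of the first kind, vanishing for negative second index. -/
noncomputable def qStirling1 (n : ℕ) (k : ℤ) : Polynomial ℤ :=
  if 0 ≤ k then qStirling1Nat n k.toNat else 0

/-- The q-r-Stirling numbers of the first kind. -/
noncomputable def qrStirling1 (r n : ℕ) (k : ℤ) : Polynomial ℤ :=
  ∑ i ∈ range (n + 1), qrise r (n - i) * qbinom n i * qStirling1 i k

lemma qint_add (a b : ℕ) : qint (a + b) = qint a + X ^ a * qint b := by
  simp [qint, Finset.sum_range_add, pow_add, Finset.mul_sum]

lemma qbinom_succ_succ (n k : ℕ) :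
    qbinom (n + 1) (k + 1) = qbinom n k + X ^ (k + 1) * qbinom n (k + 1) := rfl

lemma qbinom_zero' (n : ℕ) : qbinom n 0 = 1 := by cases n <;> rfl

lemma qbinom_eq_zero : ∀ n k : ℕ, n < k → qbinom n k = 0 := by
  intro n
  induction n with
  | zero => intro k hk; cases k with
    | zero => omega
    | succ k => rfl
  | succ n ih =>
    intro k hk
    cases k with
    | zero => omega
    | succ k =>
      rw [qbinom_succ_succ, ih k (by omega), ih (k+1) (by omega)]
      ring

lemma qS_succ_succ (n k : ℕ) :
    qStirling1Nat (n + 1) (k + 1) = qStirling1Nat n k + qint n * qStirling1Nat n (k + 1) := rfl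

lemma qS_eq_zero : ∀ n k : ℕ, n < k → qStirling1Nat n k = 0 := by
  intro n
  induction n with
  | zero => intro k hk; cases k with
    | zero => omega
    | succ k => rfl
  | succ n ih =>
    intro k hk
    cases k with
    | zero => omega
    | succ k =>
      rw [qS_succ_succ, ih k (by omega), ih (k+1) (by omega)]
      ring

lemma qint_mul_qS_zero (m : ℕ) : qint m * qStirling1Nat m 0 = 0 := by
  cases m with
  | zero => simp [qint]
  | succ m => show qint (m+1) * 0 = 0; ring

lemma sumStir (m : ℕ) :
    ∑ j ∈ range (m + 1), qStirling1Nat m j = ∏ ℓ ∈ range m, (1 + qint ℓ) := by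
  induction m with
  | zero => simp [qStirling1Nat]
  | succ m ih =>
    rw [Finset.prod_range_succ, ← ih]
    rw [Finset.sum_range_succ']
    have h0 : qStirling1Nat (m + 1) 0 = 0 := rfl
    simp only [qS_succ_succ, h0]
    rw [Finset.sum_add_distrib, ← Finset.mul_sum]
    have h1 : ∑ j ∈ range (m + 1), qStirling1Nat m (j + 1) =
        ∑ j ∈ range (m + 1), qStirling1Nat m j - qStirling1Nat m 0 := by
      rw [Finset.sum_range_succ, qS_eq_zero m (m + 1) (by omega),
        Finset.sum_range_succ' _ m]
      ring
    rw [h1, mul_sub, qint_mul_qS_zero]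
    ring

lemma lemB (r m n : ℕ) : ∏ ℓ ∈ range n, (1 + qint (ℓ + m + r)) =
    ∑ i ∈ range (n + 1), X ^ (r * (n - i)) * qrise m (n - i) * qbinom n i *
      ∏ ℓ ∈ range i, (1 + qint (ℓ + r)) := by
  induction n with
  | zero => simp [qrise, qbinom_zero']
  | succ n ih =>
    rw [Finset.prod_range_succ, ih, Finset.sum_mul]
    have key : ∀ i ∈ range (n + 1),
        (X ^ (r * (n - i)) * qrise m (n - i) * qbinom n i *
          ∏ ℓ ∈ range i, (1 + qint (ℓ + r))) * (1 + qint (n + m + r)) =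
        X ^ (r * (n - i)) * qrise m (n - i) * qbinom n i *
          ∏ ℓ ∈ range (i + 1), (1 + qint (ℓ + r)) +
        X ^ (r * (n + 1 - i)) * qrise m (n + 1 - i) * (X ^ i * qbinom n i) *
          ∏ ℓ ∈ range i, (1 + qint (ℓ + r)) := by
      intro i hi
      rw [Finset.mem_range] at hi
      have h1 : n + m + r = (i + r) + (m + (n - i)) := by omega
      have hni : n + 1 - i = (n - i) + 1 := by omega
      have h2 : qrise m (n + 1 - i) = qrise m (n - i) * qint (m + (n - i)) := by
        rw [hni, qrise, Finset.prod_range_succ]; rfl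
      have h3 : r * (n + 1 - i) = r * (n - i) + r := by
        rw [hni, Nat.mul_succ]
      rw [h1, qint_add, Finset.prod_range_succ, h2, h3, pow_add]
      ring
    rw [Finset.sum_congr rfl key, Finset.sum_add_distrib]
    rw [Finset.sum_range_succ' _ (n + 1)]
    have e1 : ∀ i ∈ range (n + 1),
        X ^ (r * (n + 1 - (i + 1))) * qrise m (n + 1 - (i + 1)) *
          qbinom (n + 1) (i + 1) * ∏ ℓ ∈ range (i + 1), (1 + qint (ℓ + r)) =
        X ^ (r * (n - i)) * qrise m (n - i) * qbinom n i *
          ∏ ℓ ∈ range (i + 1), (1 + qint (ℓ + r)) +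
        X ^ (r * (n - i)) * qrise m (n - i) * (X ^ (i + 1) * qbinom n (i + 1)) *
          ∏ ℓ ∈ range (i + 1), (1 + qint (ℓ + r)) := by
      intro i _
      rw [Nat.succ_sub_succ, qbinom_succ_succ]
      ring
    rw [Finset.sum_congr rfl e1, Finset.sum_add_distrib]
    -- remaining: ∑ B_i = ∑ C_i + T(n+1,0)
    have e2 : ∑ i ∈ range (n + 1),
        X ^ (r * (n + 1 - i)) * qrise m (n + 1 - i) * (X ^ i * qbinom n i) *
          ∏ ℓ ∈ range i, (1 + qint (ℓ + r)) =
        ∑ i ∈ range (n + 1), X ^ (r * (n - i)) * qrise m (n - i) *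
            (X ^ (i + 1) * qbinom n (i + 1)) * ∏ ℓ ∈ range (i + 1), (1 + qint (ℓ + r)) +
          X ^ (r * (n + 1 - 0)) * qrise m (n + 1 - 0) * qbinom (n + 1) 0 *
            ∏ ℓ ∈ range 0, (1 + qint (ℓ + r)) := by
      rw [Finset.sum_range_succ' (fun i => X ^ (r * (n + 1 - i)) * qrise m (n + 1 - i) *
        (X ^ i * qbinom n i) * ∏ ℓ ∈ range i, (1 + qint (ℓ + r))) n]
      rw [Finset.sum_range_succ (fun i => X ^ (r * (n - i)) * qrise m (n - i) *
        (X ^ (i + 1) * qbinom n (i + 1)) * ∏ ℓ ∈ range (i + 1), (1 + qint (ℓ + r))) n]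
      rw [qbinom_eq_zero n (n + 1) (by omega)]
      simp only [Nat.succ_sub_succ, Nat.sub_zero, qbinom_zero', pow_zero,
        Finset.prod_range_zero, mul_one, one_mul, mul_zero, zero_mul, add_zero]
    rw [e2]
    ring

lemma qS_cast (i : ℕ) (j : ℕ) : qStirling1 i (j : ℤ) = qStirling1Nat i j := by
  simp [qStirling1]

lemma sum_qrStirling (r m : ℕ) :
    ∑ j ∈ range (m + 1), qrStirling1 r m (j : ℤ) =
      ∏ ℓ ∈ range m, (1 + qint (ℓ + r)) := by
  simp only [qrStirling1]
  rw [Finset.sum_comm]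
  have inner : ∀ i ∈ range (m + 1),
      ∑ j ∈ range (m + 1), qrise r (m - i) * qbinom m i * qStirling1 i (j : ℤ) =
      qrise r (m - i) * qbinom m i * ∏ ℓ ∈ range i, (1 + qint ℓ) := by
    intro i hi
    rw [Finset.mem_range] at hi
    rw [← Finset.mul_sum]
    congr 1
    simp_rw [qS_cast]
    rw [← sumStir i]
    symm
    apply Finset.sum_subset
    · exact Finset.range_subset_range.2 (by omega)
    · intro j hj hji
      simp only [Finset.mem_range] at hj hji
      exact qS_eq_zero i j (by omega)
  rw [Finset.sum_congr rfl inner]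
  have hB := lemB 0 r m
  simp only [Nat.add_zero, Nat.zero_mul, pow_zero, one_mul, Nat.mul_zero] at hB
  rw [← hB]

theorem qprod_identity_r (m n r : ℕ) :
    ∏ ℓ ∈ range (m + n), (1 + qint (ℓ + r)) =
      ∑ i ∈ range (n + 1), ∑ j ∈ range (m + 1),
        X ^ (r * (n - i)) * qrise m (n - i) * qbinom n i * qrStirling1 r m (j : ℤ) *
          ∏ ℓ ∈ range i, (1 + qint (ℓ + r)) := by
  have hsplit : ∏ ℓ ∈ range (m + n), (1 + qint (ℓ + r)) =
      (∏ ℓ ∈ range m, (1 + qint (ℓ + r))) * ∏ ℓ ∈ range n, (1 + qint (ℓ + m + r)) := by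
    rw [Finset.prod_range_add]
    congr 1
    apply Finset.prod_congr rfl
    intro ℓ _
    congr 2
    omega
  have inner : ∀ i ∈ range (n + 1),
      ∑ j ∈ range (m + 1), X ^ (r * (n - i)) * qrise m (n - i) * qbinom n i *
          qrStirling1 r m (j : ℤ) * ∏ ℓ ∈ range i, (1 + qint (ℓ + r)) =
      (X ^ (r * (n - i)) * qrise m (n - i) * qbinom n i *
          ∏ ℓ ∈ range i, (1 + qint (ℓ + r))) * ∏ ℓ ∈ range m, (1 + qint (ℓ + r)) := by
    intro i _
    rw [← sum_qrStirling r m, Finset.mul_sum]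
    apply Finset.sum_congr rfl
    intros
    ring
  rw [Finset.sum_congr rfl inner, ← Finset.sum_mul, ← lemB r m n, hsplit]
  ring
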